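/- arXiv:1407.4403 — 9 statements merged into one kernel-verified Lean document; each statement's English description precedes it below -/
import Mathlib

section
/- Let 𝔩 be a 3-dimensional Lie algebra with basis E₀, E₁, E₂, brackets [Eᵢ,Eⱼ] = Cᵢⱼᵏ Eₖ, and let g be the bilinear form with g(E₀,E₀) = g(E₁,E₁) = -g(E₂,E₂) = 1 and g(Eᵢ,Eⱼ) = 0 for i ≠ j. Then g is ad-invariant (i.e., g([x,y],z) = g(x,[y,z]) for all x,y,z) if and only if C₁₂⁰ = -C₀₁² = -C₀₂¹ and all other structure constants vanish. -/
noncomputable section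

/-- Standard basis of ℝ³. -/
def E3 (i : Fin 3) : Fin 3 → ℝ := Pi.single i 1

/-- The B-metric g with g(e₀,e₀)=g(e₁,e₁)=1, g(e₂,e₂)=-1, off-diagonal zero. -/
def gB (x y : Fin 3 → ℝ) : ℝ := x 0 * y 0 + x 1 * y 1 - x 2 * y 2

/-- The endomorphism φ: φe₀ = 0, φe₁ = e₂, φe₂ = -e₁. -/
def phi3 (x : Fin 3 → ℝ) : Fin 3 → ℝ := ![0, -x 2, x 1]

/-- The 1-form η = e₀*. -/
def eta3 (x : Fin 3 → ℝ) : ℝ := x 0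
/-- Bracket with structure constants C: [x,y]ᵏ = Σᵢⱼ Cᵢⱼᵏ xⁱ yʲ. -/
def brC (C : Fin 3 → Fin 3 → Fin 3 → ℝ) (x y : Fin 3 → ℝ) : Fin 3 → ℝ :=
  fun k => ∑ i : Fin 3, ∑ j : Fin 3, C i j k * x i * y j

/-- g is ad-invariant (Killing) iff C₁₂⁰ = -C₀₁² = -C₀₂¹ and
all other structure constants vanish. -/
theorem g_Killing_iff (C : Fin 3 → Fin 3 → Fin 3 → ℝ)
    (hanti : ∀ i j k : Fin 3, C j i k = -C i j k) :
    (∀ x y z : Fin 3 → ℝ, gB (brC C x y) z = gB x (brC C y z)) ↔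
      (C 1 2 0 = -C 0 1 2 ∧ C 1 2 0 = -C 0 2 1 ∧
       C 0 1 0 = 0 ∧ C 0 1 1 = 0 ∧ C 0 2 0 = 0 ∧ C 0 2 2 = 0 ∧
       C 1 2 1 = 0 ∧ C 1 2 2 = 0) := by
  have hd : ∀ i k : Fin 3, C i i k = 0 := fun i k => by
    have := hanti i i k; linarith
  constructor
  · intro h
    have h012 := h (E3 0) (E3 1) (E3 2)
    have h010 := h (E3 0) (E3 1) (E3 0)
    have h011 := h (E3 0) (E3 1) (E3 1)
    have h020 := h (E3 0) (E3 2) (E3 0)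
    have h022 := h (E3 0) (E3 2) (E3 2)
    have h120 := h (E3 1) (E3 2) (E3 0)
    have h121 := h (E3 1) (E3 2) (E3 1)
    have h122 := h (E3 1) (E3 2) (E3 2)
    simp [gB, brC, E3, Fin.sum_univ_three, Pi.single_apply] at h012 h010 h011 h020 h022 h120 h121 h122
    have a1 := hanti 0 1 0
    have a2 := hanti 0 2 0
    have a3 := hanti 0 1 1
    have a4 := hanti 1 2 1
    have a5 := hanti 0 2 1
    have a6 := hanti 1 2 2
    have d1 := hd 1 0
    have d2 := hd 2 0
    have d3 := hd 2 1
    have d4 := hd 2 2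
    refine ⟨by linarith, by linarith, by linarith, by linarith, by linarith,
      by linarith, by linarith, by linarith⟩
  · rintro ⟨e1, e2, e3, e4, e5, e6, e7, e8⟩ x y z
    have n1 : C 1 0 0 = 0 := by rw [hanti 0 1 0, e3]; ring
    have n2 : C 1 0 1 = 0 := by rw [hanti 0 1 1, e4]; ring
    have n3 : C 1 0 2 = -C 0 1 2 := by rw [hanti 0 1 2]
    have n4 : C 2 0 0 = 0 := by rw [hanti 0 2 0, e5]; ring
    have n5 : C 2 0 1 = C 1 2 0 := by rw [hanti 0 2 1]; linarith
    have n6 : C 2 0 2 = 0 := by rw [hanti 0 2 2, e6]; ring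
    have n7 : C 2 1 0 = -C 1 2 0 := by rw [hanti 1 2 0]
    have n8 : C 2 1 1 = 0 := by rw [hanti 1 2 1, e7]; ring
    have n9 : C 2 1 2 = 0 := by rw [hanti 1 2 2, e8]; ring
    have n10 : C 0 2 1 = -C 1 2 0 := by linarith
    have n11 : C 1 2 0 = -C 0 1 2 := e1
    simp only [gB, brC, Fin.sum_univ_three, hd, n1, n2, n3, n4, n5, n6, n7, n8, n9, n10, n11,
      e3, e4, e5, e6, e7, e8]
    ring
end
end

section
/- Let 𝔩 be the Lie algebra with brackets [E₀,E₁] = αE₂, [E₀,E₂] = αE₁, [E₁,E₂] = 0 (the F₁₀-case) and g the metric with g(E₀,E₀) = g(E₁,E₁) = -g(E₂,E₂) = 1, g(Eᵢ,Eⱼ) = 0 for i ≠ j. Define the Levi-Civita connection ∇ by the Koszul formula 2g(∇_{Eᵢ}Eⱼ, Eₖ) = g([Eᵢ,Eⱼ],Eₖ) + g([Eₖ,Eᵢ],Eⱼ) + g([Eₖ,Eⱼ],Eᵢ). Then the curvature tensor R(x,y)z = ∇ₓ∇ᵧz - ∇ᵧ∇ₓz - ∇_{[x,y]}z vanishes identically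 on basis vectors. -/
noncomputable section

/-- Curvature tensor R(x,y)z = ∇ₓ∇ᵧz - ∇ᵧ∇ₓz - ∇_{[x,y]}z of a bilinear connection. -/
def curv (nabla : (Fin 3 → ℝ) →ₗ[ℝ] (Fin 3 → ℝ) →ₗ[ℝ] (Fin 3 → ℝ))
    (br : (Fin 3 → ℝ) → (Fin 3 → ℝ) → (Fin 3 → ℝ)) (x y z : Fin 3 → ℝ) : Fin 3 → ℝ :=
  nabla x (nabla y z) - nabla y (nabla x z) - nabla (br x y) z

/-- Curvature components R(Eᵢ,Eⱼ,Eₖ,Eₗ) = g(R(Eᵢ,Eⱼ)Eₖ, Eₗ). -/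
def Rc (nabla : (Fin 3 → ℝ) →ₗ[ℝ] (Fin 3 → ℝ) →ₗ[ℝ] (Fin 3 → ℝ))
    (br : (Fin 3 → ℝ) → (Fin 3 → ℝ) → (Fin 3 → ℝ)) (i j k l : Fin 3) : ℝ :=
  gB (curv nabla br (E3 i) (E3 j) (E3 k)) (E3 l)

/-- Ricci tensor ρⱼₖ = R₀ⱼₖ₀ + R₁ⱼₖ₁ - R₂ⱼₖ₂. -/
def ricci (nabla : (Fin 3 → ℝ) →ₗ[ℝ] (Fin 3 → ℝ) →ₗ[ℝ] (Fin 3 → ℝ))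
    (br : (Fin 3 → ℝ) → (Fin 3 → ℝ) → (Fin 3 → ℝ)) (j k : Fin 3) : ℝ :=
  Rc nabla br 0 j k 0 + Rc nabla br 1 j k 1 - Rc nabla br 2 j k 2

/-- Scalar curvature τ = ρ₀₀ + ρ₁₁ - ρ₂₂. -/
def scal (nabla : (Fin 3 → ℝ) →ₗ[ℝ] (Fin 3 → ℝ) →ₗ[ℝ] (Fin 3 → ℝ))
    (br : (Fin 3 → ℝ) → (Fin 3 → ℝ) → (Fin 3 → ℝ)) : ℝ :=
  ricci nabla br 0 0 + ricci nabla br 1 1 - ricci nabla br 2 2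

/-- The F₁₀-bracket: [E₀,E₁] = αE₂, [E₀,E₂] = αE₁, [E₁,E₂] = 0. -/
def brF10 (α : ℝ) (x y : Fin 3 → ℝ) : Fin 3 → ℝ :=
  ![0, α * (x 0 * y 2 - x 2 * y 0), α * (x 0 * y 1 - x 1 * y 0)]

/-- the F₁₀-manifolds are flat. -/
theorem F10_flat (α : ℝ)
    (nabla : (Fin 3 → ℝ) →ₗ[ℝ] (Fin 3 → ℝ) →ₗ[ℝ] (Fin 3 → ℝ))
    (hK : ∀ i j k : Fin 3, 2 * gB (nabla (E3 i) (E3 j)) (E3 k) =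
      gB (brF10 α (E3 i) (E3 j)) (E3 k) + gB (brF10 α (E3 k) (E3 i)) (E3 j)
        + gB (brF10 α (E3 k) (E3 j)) (E3 i)) :
    ∀ i j k l : Fin 3, Rc nabla (brF10 α) i j k l = 0 := by
  have hg0 : ∀ v : Fin 3 → ℝ, gB v (E3 0) = v 0 := by
    intro v; simp [gB, E3, Pi.single_apply]
  have hg1 : ∀ v : Fin 3 → ℝ, gB v (E3 1) = v 1 := by
    intro v; simp [gB, E3, Pi.single_apply]
  have hg2 : ∀ v : Fin 3 → ℝ, gB v (E3 2) = -v 2 := by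
    intro v; simp [gB, E3, Pi.single_apply]
  have n00 : nabla (E3 0) (E3 0) = (0 : Fin 3 → ℝ) := by
    funext k; fin_cases k
    · have h := hK 0 0 0; rw [hg0] at h
      simp [brF10, gB, E3, Pi.single_apply] at h ⊢; linarith
    · have h := hK 0 0 1; rw [hg1] at h
      simp [brF10, gB, E3, Pi.single_apply] at h ⊢; linarith
    · have h := hK 0 0 2; rw [hg2] at h
      simp [brF10, gB, E3, Pi.single_apply] at h ⊢; linarith
  have n01 : nabla (E3 0) (E3 1) = α • E3 2 := by
    funext k; fin_cases k
    · have h := hK 0 1 0; rw [hg0] at h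
      simp [brF10, gB, E3, Pi.single_apply] at h ⊢; linarith
    · have h := hK 0 1 1; rw [hg1] at h
      simp [brF10, gB, E3, Pi.single_apply] at h ⊢; linarith
    · have h := hK 0 1 2; rw [hg2] at h
      simp [brF10, gB, E3, Pi.single_apply] at h ⊢; linarith
  have n02 : nabla (E3 0) (E3 2) = α • E3 1 := by
    funext k; fin_cases k
    · have h := hK 0 2 0; rw [hg0] at h
      simp [brF10, gB, E3, Pi.single_apply] at h ⊢; linarith
    · have h := hK 0 2 1; rw [hg1] at h
      simp [brF10, gB, E3, Pi.single_apply] at h ⊢; linarith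
    · have h := hK 0 2 2; rw [hg2] at h
      simp [brF10, gB, E3, Pi.single_apply] at h ⊢; linarith
  have n10 : nabla (E3 1) (E3 0) = (0 : Fin 3 → ℝ) := by
    funext k; fin_cases k
    · have h := hK 1 0 0; rw [hg0] at h
      simp [brF10, gB, E3, Pi.single_apply] at h ⊢; linarith
    · have h := hK 1 0 1; rw [hg1] at h
      simp [brF10, gB, E3, Pi.single_apply] at h ⊢; linarith
    · have h := hK 1 0 2; rw [hg2] at h
      simp [brF10, gB, E3, Pi.single_apply] at h ⊢; linarith
  have n11 : nabla (E3 1) (E3 1) = (0 : Fin 3 → ℝ) := by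
    funext k; fin_cases k
    · have h := hK 1 1 0; rw [hg0] at h
      simp [brF10, gB, E3, Pi.single_apply] at h ⊢; linarith
    · have h := hK 1 1 1; rw [hg1] at h
      simp [brF10, gB, E3, Pi.single_apply] at h ⊢; linarith
    · have h := hK 1 1 2; rw [hg2] at h
      simp [brF10, gB, E3, Pi.single_apply] at h ⊢; linarith
  have n12 : nabla (E3 1) (E3 2) = (0 : Fin 3 → ℝ) := by
    funext k; fin_cases k
    · have h := hK 1 2 0; rw [hg0] at h
      simp [brF10, gB, E3, Pi.single_apply] at h ⊢; linarith
    · have h := hK 1 2 1; rw [hg1] at h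
      simp [brF10, gB, E3, Pi.single_apply] at h ⊢; linarith
    · have h := hK 1 2 2; rw [hg2] at h
      simp [brF10, gB, E3, Pi.single_apply] at h ⊢; linarith
  have n20 : nabla (E3 2) (E3 0) = (0 : Fin 3 → ℝ) := by
    funext k; fin_cases k
    · have h := hK 2 0 0; rw [hg0] at h
      simp [brF10, gB, E3, Pi.single_apply] at h ⊢; linarith
    · have h := hK 2 0 1; rw [hg1] at h
      simp [brF10, gB, E3, Pi.single_apply] at h ⊢; linarith
    · have h := hK 2 0 2; rw [hg2] at h
      simp [brF10, gB, E3, Pi.single_apply] at h ⊢; linarith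
  have n21 : nabla (E3 2) (E3 1) = (0 : Fin 3 → ℝ) := by
    funext k; fin_cases k
    · have h := hK 2 1 0; rw [hg0] at h
      simp [brF10, gB, E3, Pi.single_apply] at h ⊢; linarith
    · have h := hK 2 1 1; rw [hg1] at h
      simp [brF10, gB, E3, Pi.single_apply] at h ⊢; linarith
    · have h := hK 2 1 2; rw [hg2] at h
      simp [brF10, gB, E3, Pi.single_apply] at h ⊢; linarith
  have n22 : nabla (E3 2) (E3 2) = (0 : Fin 3 → ℝ) := by
    funext k; fin_cases k
    · have h := hK 2 2 0; rw [hg0] at h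
      simp [brF10, gB, E3, Pi.single_apply] at h ⊢; linarith
    · have h := hK 2 2 1; rw [hg1] at h
      simp [brF10, gB, E3, Pi.single_apply] at h ⊢; linarith
    · have h := hK 2 2 2; rw [hg2] at h
      simp [brF10, gB, E3, Pi.single_apply] at h ⊢; linarith
  have b01 : brF10 α (E3 0) (E3 1) = α • E3 2 := by
    funext k; fin_cases k <;> simp [brF10, E3, Pi.single_apply]
  have b02 : brF10 α (E3 0) (E3 2) = α • E3 1 := by
    funext k; fin_cases k <;> simp [brF10, E3, Pi.single_apply]
  have b10 : brF10 α (E3 1) (E3 0) = (-α) • E3 2 := by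
    funext k; fin_cases k <;> simp [brF10, E3, Pi.single_apply]
  have b20 : brF10 α (E3 2) (E3 0) = (-α) • E3 1 := by
    funext k; fin_cases k <;> simp [brF10, E3, Pi.single_apply]
  have b00 : brF10 α (E3 0) (E3 0) = (0 : Fin 3 → ℝ) := by
    funext k; fin_cases k <;> simp [brF10, E3, Pi.single_apply]
  have b11 : brF10 α (E3 1) (E3 1) = (0 : Fin 3 → ℝ) := by
    funext k; fin_cases k <;> simp [brF10, E3, Pi.single_apply]
  have b22 : brF10 α (E3 2) (E3 2) = (0 : Fin 3 → ℝ) := by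
    funext k; fin_cases k <;> simp [brF10, E3, Pi.single_apply]
  have b12 : brF10 α (E3 1) (E3 2) = (0 : Fin 3 → ℝ) := by
    funext k; fin_cases k <;> simp [brF10, E3, Pi.single_apply]
  have b21 : brF10 α (E3 2) (E3 1) = (0 : Fin 3 → ℝ) := by
    funext k; fin_cases k <;> simp [brF10, E3, Pi.single_apply]
  intro i j k l
  fin_cases i <;> fin_cases j <;> fin_cases k <;>
    simp [Rc, curv, b01, b02, b10, b20, b00, b11, b22, b12, b21, n00, n01, n02, n10, n11, n12, n20, n21, n22, map_smul, map_zero, gB,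
      LinearMap.smul_apply, LinearMap.map_smul, smul_zero]
end
end

section
/- Let 𝔩 be the F₁-Lie algebra with brackets [E₀,E₁] = [E₀,E₂] = 0, [E₁,E₂] = αE₁ + βE₂, and g with g(E₀,E₀) = g(E₁,E₁) = -g(E₂,E₂) = 1, off-diagonal zero. With the Koszul-formula connection and R(x,y,z,w) = g(R(x,y)z,w), one has R(E₁,E₂,E₁,E₂) = α² - β². In particular, the induced manifold is flat if and only if α² = β². -/
noncomputable section

/-- The F₁-bracket: [E₀,E₁] = [E₀,E₂] = 0, [E₁,E₂] = αE₁ + βE₂. -/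
def brF1 (α β : ℝ) (x y : Fin 3 → ℝ) : Fin 3 → ℝ :=
  ![0, α * (x 1 * y 2 - x 2 * y 1), β * (x 1 * y 2 - x 2 * y 1)]

set_option maxHeartbeats 1000000 in
/-- for F₁, R(E₁,E₂,E₁,E₂) = α² - β², and flatness holds iff α² = β². -/
theorem F1_curvature (α β : ℝ)
    (nabla : (Fin 3 → ℝ) →ₗ[ℝ] (Fin 3 → ℝ) →ₗ[ℝ] (Fin 3 → ℝ))
    (hK : ∀ i j k : Fin 3, 2 * gB (nabla (E3 i) (E3 j)) (E3 k) =
      gB (brF1 α β (E3 i) (E3 j)) (E3 k) + gB (brF1 α β (E3 k) (E3 i)) (E3 j)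
        + gB (brF1 α β (E3 k) (E3 j)) (E3 i)) :
    Rc nabla (brF1 α β) 1 2 1 2 = α ^ 2 - β ^ 2 ∧
    ((∀ i j k l : Fin 3, Rc nabla (brF1 α β) i j k l = 0) ↔ α ^ 2 = β ^ 2) := by
  have hbasis : ∀ v : Fin 3 → ℝ, v = v 0 • E3 0 + v 1 • E3 1 + v 2 • E3 2 := by
    intro v; ext k; fin_cases k <;> simp [E3]
  have h00 : nabla (E3 0) (E3 0) = ![0,0,0] := by
    have a0 := hK 0 0 0; have a1 := hK 0 0 1; have a2 := hK 0 0 2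
    ext k; fin_cases k <;> simp [gB, E3, brF1, Pi.single_apply] at a0 a1 a2 ⊢ <;> linarith
  have h01 : nabla (E3 0) (E3 1) = ![0,0,0] := by
    have a0 := hK 0 1 0; have a1 := hK 0 1 1; have a2 := hK 0 1 2
    ext k; fin_cases k <;> simp [gB, E3, brF1, Pi.single_apply] at a0 a1 a2 ⊢ <;> linarith
  have h02 : nabla (E3 0) (E3 2) = ![0,0,0] := by
    have a0 := hK 0 2 0; have a1 := hK 0 2 1; have a2 := hK 0 2 2
    ext k; fin_cases k <;> simp [gB, E3, brF1, Pi.single_apply] at a0 a1 a2 ⊢ <;> linarith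
  have h10 : nabla (E3 1) (E3 0) = ![0,0,0] := by
    have a0 := hK 1 0 0; have a1 := hK 1 0 1; have a2 := hK 1 0 2
    ext k; fin_cases k <;> simp [gB, E3, brF1, Pi.single_apply] at a0 a1 a2 ⊢ <;> linarith
  have h11 : nabla (E3 1) (E3 1) = ![0,0,α] := by
    have a0 := hK 1 1 0; have a1 := hK 1 1 1; have a2 := hK 1 1 2
    ext k; fin_cases k <;> simp [gB, E3, brF1, Pi.single_apply] at a0 a1 a2 ⊢ <;> linarith
  have h12 : nabla (E3 1) (E3 2) = ![0,α,0] := by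
    have a0 := hK 1 2 0; have a1 := hK 1 2 1; have a2 := hK 1 2 2
    ext k; fin_cases k <;> simp [gB, E3, brF1, Pi.single_apply] at a0 a1 a2 ⊢ <;> linarith
  have h20 : nabla (E3 2) (E3 0) = ![0,0,0] := by
    have a0 := hK 2 0 0; have a1 := hK 2 0 1; have a2 := hK 2 0 2
    ext k; fin_cases k <;> simp [gB, E3, brF1, Pi.single_apply] at a0 a1 a2 ⊢ <;> linarith
  have h21 : nabla (E3 2) (E3 1) = ![0,0,-β] := by
    have a0 := hK 2 1 0; have a1 := hK 2 1 1; have a2 := hK 2 1 2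
    ext k; fin_cases k <;> simp [gB, E3, brF1, Pi.single_apply] at a0 a1 a2 ⊢ <;> linarith
  have h22 : nabla (E3 2) (E3 2) = ![0,-β,0] := by
    have a0 := hK 2 2 0; have a1 := hK 2 2 1; have a2 := hK 2 2 2
    ext k; fin_cases k <;> simp [gB, E3, brF1, Pi.single_apply] at a0 a1 a2 ⊢ <;> linarith
  have hnab : ∀ x y : Fin 3 → ℝ,
      nabla x y = ![0, (α * x 1 - β * x 2) * y 2, (α * x 1 - β * x 2) * y 1] := by
    intro x y
    have e : nabla x y = nabla (x 0 • E3 0 + x 1 • E3 1 + x 2 • E3 2)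
        (y 0 • E3 0 + y 1 • E3 1 + y 2 • E3 2) := by rw [← hbasis, ← hbasis]
    rw [e]
    simp only [map_add, map_smul, LinearMap.add_apply, LinearMap.smul_apply,
      h00, h01, h02, h10, h11, h12, h20, h21, h22]
    ext k; fin_cases k <;> simp [E3, Pi.single_apply] <;> ring
  have hpart1 : Rc nabla (brF1 α β) 1 2 1 2 = α ^ 2 - β ^ 2 := by
    simp [Rc, curv, hnab, gB, brF1, E3, Pi.single_apply]; ring
  refine ⟨hpart1, ⟨fun h => ?_, fun h i j k l => ?_⟩⟩
  · have := h 1 2 1 2; rw [hpart1] at this; linarith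
  · fin_cases i <;> fin_cases j <;> fin_cases k <;> fin_cases l <;>
      simp [Rc, curv, hnab, gB, brF1, E3, Pi.single_apply] <;> nlinarith [h]
end
end

section
/- Let 𝔩 be the F₁-Lie algebra ([E₀,E₁] = [E₀,E₂] = 0, [E₁,E₂] = αE₁ + βE₂) with the standard B-metric g. The nonzero covariant derivatives of basis vectors via the Koszul formula are ∇_{E₁}E₁ = αE₂, ∇_{E₁}E₂ = αE₁, ∇_{E₂}E₁ = -βE₂, ∇_{E₂}E₂ = -βE₁, and all ∇_{E₀}Eⱼ = ∇_{Eᵢ}E₀ = 0. -/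
noncomputable section

/-- the covariant derivatives of the basis vectors in the F₁-case. -/
theorem F1_nabla (α β : ℝ)
    (nabla : (Fin 3 → ℝ) →ₗ[ℝ] (Fin 3 → ℝ) →ₗ[ℝ] (Fin 3 → ℝ))
    (hK : ∀ i j k : Fin 3, 2 * gB (nabla (E3 i) (E3 j)) (E3 k) =
      gB (brF1 α β (E3 i) (E3 j)) (E3 k) + gB (brF1 α β (E3 k) (E3 i)) (E3 j)
        + gB (brF1 α β (E3 k) (E3 j)) (E3 i)) :
    nabla (E3 1) (E3 1) = α • E3 2 ∧ nabla (E3 1) (E3 2) = α • E3 1 ∧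
    nabla (E3 2) (E3 1) = -β • E3 2 ∧ nabla (E3 2) (E3 2) = -β • E3 1 ∧
    (∀ j : Fin 3, nabla (E3 0) (E3 j) = 0) ∧
    (∀ i : Fin 3, nabla (E3 i) (E3 0) = 0) := by
  have hext : ∀ v w : Fin 3 → ℝ, (∀ k : Fin 3, gB v (E3 k) = gB w (E3 k)) → v = w := by
    intro v w h
    have h0 := h 0; have h1 := h 1; have h2 := h 2
    simp [gB, E3, Pi.single_apply] at h0 h1 h2
    funext k
    fin_cases k <;> simp_all <;> linarith
  have key : ∀ i j : Fin 3, ∀ v : Fin 3 → ℝ,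
      (∀ k : Fin 3, 2 * gB (nabla (E3 i) (E3 j)) (E3 k) = 2 * gB v (E3 k)) →
      nabla (E3 i) (E3 j) = v := by
    intro i j v h
    exact hext _ _ fun k => by have := h k; linarith
  refine ⟨?_, ?_, ?_, ?_, ?_, ?_⟩
  · exact key 1 1 _ fun k => by
      have := hK 1 1 k
      fin_cases k <;> simp [gB, E3, brF1, Pi.single_apply] at this ⊢ <;> linarith
  · exact key 1 2 _ fun k => by
      have := hK 1 2 k
      fin_cases k <;> simp [gB, E3, brF1, Pi.single_apply] at this ⊢ <;> linarith
  · exact key 2 1 _ fun k => by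
      have := hK 2 1 k
      fin_cases k <;> simp [gB, E3, brF1, Pi.single_apply] at this ⊢ <;> linarith
  · exact key 2 2 _ fun k => by
      have := hK 2 2 k
      fin_cases k <;> simp [gB, E3, brF1, Pi.single_apply] at this ⊢ <;> linarith
  · intro j
    exact key 0 j 0 fun k => by
      have := hK 0 j k
      fin_cases j <;> fin_cases k <;>
        simp [gB, E3, brF1, Pi.single_apply] at this ⊢ <;> linarith
  · intro i
    exact key i 0 0 fun k => by
      have := hK i 0 k
      fin_cases i <;> fin_cases k <;>
        simp [gB, E3, brF1, Pi.single_apply] at this ⊢ <;> linarith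
end
end

section
/- Let 𝔩 be the F₅-Lie algebra with brackets [E₀,E₁] = αE₁, [E₀,E₂] = αE₂, [E₁,E₂] = 0 and the standard B-metric g. Then the Ricci tensor satisfies ρ = (τ/3)g with τ = -6α², i.e., the induced manifold is Einstein with negative scalar curvature whenever α ≠ 0. -/
noncomputable section

/-- The F₅-bracket: [E₀,E₁] = αE₁, [E₀,E₂] = αE₂, [E₁,E₂] = 0. -/
def brF5 (α : ℝ) (x y : Fin 3 → ℝ) : Fin 3 → ℝ :=
  ![0, α * (x 0 * y 1 - x 1 * y 0), α * (x 0 * y 2 - x 2 * y 0)]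

/-- the F₅-case is Einstein: ρ = (τ/3)g with τ = -6α² < 0 for α ≠ 0. -/
theorem F5_Einstein (α : ℝ)
    (nabla : (Fin 3 → ℝ) →ₗ[ℝ] (Fin 3 → ℝ) →ₗ[ℝ] (Fin 3 → ℝ))
    (hK : ∀ i j k : Fin 3, 2 * gB (nabla (E3 i) (E3 j)) (E3 k) =
      gB (brF5 α (E3 i) (E3 j)) (E3 k) + gB (brF5 α (E3 k) (E3 i)) (E3 j)
        + gB (brF5 α (E3 k) (E3 j)) (E3 i)) :
    (∀ j k : Fin 3, ricci nabla (brF5 α) j k =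
      (scal nabla (brF5 α) / 3) * gB (E3 j) (E3 k)) ∧
    scal nabla (brF5 α) = -6 * α ^ 2 ∧
    (α ≠ 0 → scal nabla (brF5 α) < 0) := by
  have key : ∀ i j : Fin 3, nabla (E3 i) (E3 j) =
      α • ![E3 i 1 * E3 j 1 - E3 i 2 * E3 j 2, -(E3 i 1 * E3 j 0), -(E3 i 2 * E3 j 0)] := by
    intro i j
    funext k
    have h := hK i j k
    fin_cases i <;> fin_cases j <;> fin_cases k <;>
      simp [gB, E3, brF5, Pi.single_apply] at h ⊢ <;> linarith
  have hdecomp : ∀ x : Fin 3 → ℝ, x = x 0 • E3 0 + x 1 • E3 1 + x 2 • E3 2 := by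
    intro x
    funext i
    fin_cases i <;> simp [E3, Pi.single_apply]
  have hN : ∀ x y : Fin 3 → ℝ, nabla x y =
      α • ![x 1 * y 1 - x 2 * y 2, -(x 1 * y 0), -(x 2 * y 0)] := by
    intro x y
    conv_lhs => rw [hdecomp x, hdecomp y]
    simp only [map_add, map_smul, LinearMap.add_apply, LinearMap.smul_apply, key]
    funext k
    fin_cases k <;> simp [E3, Pi.single_apply] <;> ring
  have hs : scal nabla (brF5 α) = -6 * α ^ 2 := by
    simp [scal, ricci, Rc, curv, hN, brF5, gB, E3, Pi.single_apply]
    ring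
  refine ⟨?_, hs, ?_⟩
  · intro j k
    rw [hs]
    fin_cases j <;> fin_cases k <;>
      simp [ricci, Rc, curv, hN, brF5, gB, E3, Pi.single_apply] <;> ring
  · intro hα
    rw [hs]
    have h2 : (0:ℝ) < α ^ 2 := by positivity
    linarith
end
end

section
/- Let 𝔩 be the F₈-Lie algebra with brackets [E₀,E₁] = αE₂, [E₀,E₂] = αE₁, [E₁,E₂] = -2αE₀ and the standard B-metric g. Then R(E₀,E₁,E₀,E₁) = α², R(E₀,E₂,E₀,E₂) = -α², R(E₁,E₂,E₁,E₂) = α², the scalar curvature is τ = -2α², and the Ricci tensor satisfies ρ = τ·(η⊗η) where η = E₀*. -/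
noncomputable section

/-- The F₈-bracket: [E₀,E₁] = αE₂, [E₀,E₂] = αE₁, [E₁,E₂] = -2αE₀. -/
def brF8 (α : ℝ) (x y : Fin 3 → ℝ) : Fin 3 → ℝ :=
  ![-2 * α * (x 1 * y 2 - x 2 * y 1),
    α * (x 0 * y 2 - x 2 * y 0),
    α * (x 0 * y 1 - x 1 * y 0)]

/-- curvature of the F₈-case: τ = -2α² and ρ = τ·η⊗η. -/
theorem F8_curvature (α : ℝ)
    (nabla : (Fin 3 → ℝ) →ₗ[ℝ] (Fin 3 → ℝ) →ₗ[ℝ] (Fin 3 → ℝ))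
    (hK : ∀ i j k : Fin 3, 2 * gB (nabla (E3 i) (E3 j)) (E3 k) =
      gB (brF8 α (E3 i) (E3 j)) (E3 k) + gB (brF8 α (E3 k) (E3 i)) (E3 j)
        + gB (brF8 α (E3 k) (E3 j)) (E3 i)) :
    Rc nabla (brF8 α) 0 1 0 1 = α ^ 2 ∧ Rc nabla (brF8 α) 0 2 0 2 = -α ^ 2 ∧
    Rc nabla (brF8 α) 1 2 1 2 = α ^ 2 ∧
    scal nabla (brF8 α) = -2 * α ^ 2 ∧
    (∀ j k : Fin 3, ricci nabla (brF8 α) j k =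
      scal nabla (brF8 α) * (eta3 (E3 j) * eta3 (E3 k))) := by
  have comp : ∀ (i j : Fin 3) (v : Fin 3 → ℝ),
      nabla (E3 i) (E3 j) 0 = v 0 → nabla (E3 i) (E3 j) 1 = v 1 →
      nabla (E3 i) (E3 j) 2 = v 2 → nabla (E3 i) (E3 j) = v := by
    intro i j v h0 h1 h2
    funext k; fin_cases k <;> assumption
  have h00 : nabla (E3 0) (E3 0) = (0 : Fin 3 → ℝ) := by
    have a0 := hK 0 0 0; have a1 := hK 0 0 1; have a2 := hK 0 0 2
    simp [gB, brF8, E3, Pi.single_apply] at a0 a1 a2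
    refine comp 0 0 0 ?_ ?_ ?_ <;> (simp [E3, Pi.single_apply]; try linarith)
  have h01 : nabla (E3 0) (E3 1) = (0 : Fin 3 → ℝ) := by
    have a0 := hK 0 1 0; have a1 := hK 0 1 1; have a2 := hK 0 1 2
    simp [gB, brF8, E3, Pi.single_apply] at a0 a1 a2
    refine comp 0 1 0 ?_ ?_ ?_ <;> (simp [E3, Pi.single_apply]; try linarith)
  have h02 : nabla (E3 0) (E3 2) = (0 : Fin 3 → ℝ) := by
    have a0 := hK 0 2 0; have a1 := hK 0 2 1; have a2 := hK 0 2 2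
    simp [gB, brF8, E3, Pi.single_apply] at a0 a1 a2
    refine comp 0 2 0 ?_ ?_ ?_ <;> (simp [E3, Pi.single_apply]; try linarith)
  have h10 : nabla (E3 1) (E3 0) = (-α) • E3 2 := by
    have a0 := hK 1 0 0; have a1 := hK 1 0 1; have a2 := hK 1 0 2
    simp [gB, brF8, E3, Pi.single_apply] at a0 a1 a2
    refine comp 1 0 _ ?_ ?_ ?_ <;> (simp [E3, Pi.single_apply]; try linarith)
  have h11 : nabla (E3 1) (E3 1) = (0 : Fin 3 → ℝ) := by
    have a0 := hK 1 1 0; have a1 := hK 1 1 1; have a2 := hK 1 1 2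
    simp [gB, brF8, E3, Pi.single_apply] at a0 a1 a2
    refine comp 1 1 0 ?_ ?_ ?_ <;> (simp [E3, Pi.single_apply]; try linarith)
  have h12 : nabla (E3 1) (E3 2) = (-α) • E3 0 := by
    have a0 := hK 1 2 0; have a1 := hK 1 2 1; have a2 := hK 1 2 2
    simp [gB, brF8, E3, Pi.single_apply] at a0 a1 a2
    refine comp 1 2 _ ?_ ?_ ?_ <;> (simp [E3, Pi.single_apply]; try linarith)
  have h20 : nabla (E3 2) (E3 0) = (-α) • E3 1 := by
    have a0 := hK 2 0 0; have a1 := hK 2 0 1; have a2 := hK 2 0 2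
    simp [gB, brF8, E3, Pi.single_apply] at a0 a1 a2
    refine comp 2 0 _ ?_ ?_ ?_ <;> (simp [E3, Pi.single_apply]; try linarith)
  have h21 : nabla (E3 2) (E3 1) = α • E3 0 := by
    have a0 := hK 2 1 0; have a1 := hK 2 1 1; have a2 := hK 2 1 2
    simp [gB, brF8, E3, Pi.single_apply] at a0 a1 a2
    refine comp 2 1 _ ?_ ?_ ?_ <;> (simp [E3, Pi.single_apply]; try linarith)
  have h22 : nabla (E3 2) (E3 2) = (0 : Fin 3 → ℝ) := by
    have a0 := hK 2 2 0; have a1 := hK 2 2 1; have a2 := hK 2 2 2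
    simp [gB, brF8, E3, Pi.single_apply] at a0 a1 a2
    refine comp 2 2 0 ?_ ?_ ?_ <;> (simp [E3, Pi.single_apply]; try linarith)
  have hdec : ∀ v : Fin 3 → ℝ, v = v 0 • E3 0 + v 1 • E3 1 + v 2 • E3 2 := by
    intro v; funext k; fin_cases k <;> simp [E3, Pi.single_apply]
  have key : ∀ x y : Fin 3 → ℝ,
      nabla x y = ![α * (x 2 * y 1) - α * (x 1 * y 2), -α * (x 2 * y 0), -α * (x 1 * y 0)] := by
    intro x y
    have hx := hdec x; have hy := hdec y
    nth_rewrite 1 [hx, hy]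
    simp only [map_add, map_smul, LinearMap.add_apply, LinearMap.smul_apply,
      h00, h01, h02, h10, h11, h12, h20, h21, h22]
    funext k; fin_cases k <;> simp [E3, Pi.single_apply] <;> ring
  have hcurv : ∀ x y z : Fin 3 → ℝ,
      curv nabla (brF8 α) x y z =
        ![-(α^2) * ((x 0 * y 1 - x 1 * y 0) * z 1 - (x 0 * y 2 - x 2 * y 0) * z 2),
          α^2 * z 2 * (x 2 * y 1 - x 1 * y 2) + α^2 * (x 0 * y 1 - x 1 * y 0) * z 0,
          α^2 * z 1 * (x 2 * y 1 - x 1 * y 2) + α^2 * (x 0 * y 2 - x 2 * y 0) * z 0] := by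
    intro x y z
    simp only [curv, key, brF8]
    funext k
    fin_cases k <;> simp <;> ring
  have hRc : ∀ i j k l : Fin 3, Rc nabla (brF8 α) i j k l =
      gB (curv nabla (brF8 α) (E3 i) (E3 j) (E3 k)) (E3 l) := fun _ _ _ _ => rfl
  have hval : ∀ i j k l : Fin 3, Rc nabla (brF8 α) i j k l =
      (-(α^2) * ((E3 i 0 * E3 j 1 - E3 i 1 * E3 j 0) * E3 k 1
          - (E3 i 0 * E3 j 2 - E3 i 2 * E3 j 0) * E3 k 2)) * E3 l 0
      + (α^2 * E3 k 2 * (E3 i 2 * E3 j 1 - E3 i 1 * E3 j 2)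
          + α^2 * (E3 i 0 * E3 j 1 - E3 i 1 * E3 j 0) * E3 k 0) * E3 l 1
      - (α^2 * E3 k 1 * (E3 i 2 * E3 j 1 - E3 i 1 * E3 j 2)
          + α^2 * (E3 i 0 * E3 j 2 - E3 i 2 * E3 j 0) * E3 k 0) * E3 l 2 := by
    intro i j k l
    rw [hRc, hcurv]
    simp only [gB, Matrix.cons_val_zero, Matrix.cons_val_one, Matrix.head_cons,
      Matrix.cons_val_two, Matrix.tail_cons]
  constructor
  · rw [hval]; simp [E3, Pi.single_apply]
  constructor
  · rw [hval]; simp [E3, Pi.single_apply]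
  constructor
  · rw [hval]; simp [E3, Pi.single_apply]
  have hscal : scal nabla (brF8 α) = -2 * α ^ 2 := by
    simp only [scal, ricci, hval]
    simp [E3, Pi.single_apply]; ring
  refine ⟨hscal, ?_⟩
  intro j k
  rw [hscal]
  fin_cases j <;> fin_cases k <;>
    · simp only [ricci, hval, eta3]
      simp [E3, Pi.single_apply] <;> ring
end
end

section
/- Let 𝔩 be the F₉-Lie algebra with brackets [E₀,E₁] = αE₁, [E₀,E₂] = -αE₂, [E₁,E₂] = 0 and the standard B-metric g. Then the nonzero covariant derivatives are ∇_{E₁}E₁ = ∇_{E₂}E₂ = αE₀, ∇_{E₁}E₀ = -αE₁, ∇_{E₂}E₀ = αE₂, and the curvature components satisfy R(E₀,E₁,E₀,E₁) = α², R(E₀,E₂,E₀,E₂) = -α², R(E₁,E₂,E₁,E₂) = α². -/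
noncomputable section

/-- The F₉-bracket: [E₀,E₁] = αE₁, [E₀,E₂] = -αE₂, [E₁,E₂] = 0. -/
def brF9 (α : ℝ) (x y : Fin 3 → ℝ) : Fin 3 → ℝ :=
  ![0, α * (x 0 * y 1 - x 1 * y 0), -α * (x 0 * y 2 - x 2 * y 0)]

/-- covariant derivatives and curvature components in the F₉-case. -/
theorem F9_curvature (α : ℝ)
    (nabla : (Fin 3 → ℝ) →ₗ[ℝ] (Fin 3 → ℝ) →ₗ[ℝ] (Fin 3 → ℝ))
    (hK : ∀ i j k : Fin 3, 2 * gB (nabla (E3 i) (E3 j)) (E3 k) =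
      gB (brF9 α (E3 i) (E3 j)) (E3 k) + gB (brF9 α (E3 k) (E3 i)) (E3 j)
        + gB (brF9 α (E3 k) (E3 j)) (E3 i)) :
    nabla (E3 1) (E3 1) = α • E3 0 ∧ nabla (E3 2) (E3 2) = α • E3 0 ∧
    nabla (E3 1) (E3 0) = -α • E3 1 ∧ nabla (E3 2) (E3 0) = α • E3 2 ∧
    Rc nabla (brF9 α) 0 1 0 1 = α ^ 2 ∧ Rc nabla (brF9 α) 0 2 0 2 = -α ^ 2 ∧
    Rc nabla (brF9 α) 1 2 1 2 = α ^ 2 := by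
  have comp : ∀ i j : Fin 3, ∀ w : Fin 3 → ℝ,
      (∀ k : Fin 3, 2 * gB w (E3 k) =
        gB (brF9 α (E3 i) (E3 j)) (E3 k) + gB (brF9 α (E3 k) (E3 i)) (E3 j)
          + gB (brF9 α (E3 k) (E3 j)) (E3 i)) → nabla (E3 i) (E3 j) = w := by
    intro i j w hw
    have key : ∀ k, gB (nabla (E3 i) (E3 j)) (E3 k) = gB w (E3 k) := by
      intro k; have h1 := hK i j k; have h2 := hw k; linarith
    funext x
    fin_cases x
    · have := key 0; simp [gB, E3, Pi.single_apply] at this; exact this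
    · have := key 1; simp [gB, E3, Pi.single_apply] at this; exact this
    · have := key 2; simp [gB, E3, Pi.single_apply] at this; exact this
  have n00 : nabla (E3 0) (E3 0) = 0 := by
    apply comp; intro k; fin_cases k <;> simp [gB, E3, brF9, Pi.single_apply]
  have n01 : nabla (E3 0) (E3 1) = 0 := by
    apply comp; intro k; fin_cases k <;> simp [gB, E3, brF9, Pi.single_apply]
  have n02 : nabla (E3 0) (E3 2) = 0 := by
    apply comp; intro k; fin_cases k <;> simp [gB, E3, brF9, Pi.single_apply]
  have n10 : nabla (E3 1) (E3 0) = -α • E3 1 := by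
    apply comp; intro k; fin_cases k <;>
      simp [gB, E3, brF9, Pi.single_apply] <;> ring
  have n11 : nabla (E3 1) (E3 1) = α • E3 0 := by
    apply comp; intro k; fin_cases k <;>
      simp [gB, E3, brF9, Pi.single_apply] <;> ring
  have n12 : nabla (E3 1) (E3 2) = 0 := by
    apply comp; intro k; fin_cases k <;> simp [gB, E3, brF9, Pi.single_apply] <;> ring
  have n20 : nabla (E3 2) (E3 0) = α • E3 2 := by
    apply comp; intro k; fin_cases k <;>
      simp [gB, E3, brF9, Pi.single_apply] <;> ring
  have n21 : nabla (E3 2) (E3 1) = 0 := by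
    apply comp; intro k; fin_cases k <;> simp [gB, E3, brF9, Pi.single_apply] <;> ring
  have n22 : nabla (E3 2) (E3 2) = α • E3 0 := by
    apply comp; intro k; fin_cases k <;>
      simp [gB, E3, brF9, Pi.single_apply] <;> ring
  have br01 : brF9 α (E3 0) (E3 1) = α • E3 1 := by
    funext x; fin_cases x <;> simp [brF9, E3, Pi.single_apply]
  have br02 : brF9 α (E3 0) (E3 2) = (-α) • E3 2 := by
    funext x; fin_cases x <;> simp [brF9, E3, Pi.single_apply]
  have br12 : brF9 α (E3 1) (E3 2) = (0:ℝ) • E3 0 := by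
    funext x; fin_cases x <;> simp [brF9, E3, Pi.single_apply]
  refine ⟨n11, n22, n10, n20, ?_, ?_, ?_⟩
  · show gB (curv nabla (brF9 α) (E3 0) (E3 1) (E3 0)) (E3 1) = α ^ 2
    unfold curv
    simp only [br01, n00, n10, map_smul, map_neg, map_zero, LinearMap.smul_apply,
      LinearMap.neg_apply, LinearMap.zero_apply, n01, n11, smul_zero, neg_zero,
      smul_neg, smul_smul]
    simp [gB, E3, Pi.single_apply]
    ring
  · show gB (curv nabla (brF9 α) (E3 0) (E3 2) (E3 0)) (E3 2) = -α ^ 2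
    unfold curv
    simp only [br02, n00, n20, map_smul, map_neg, map_zero, LinearMap.smul_apply,
      LinearMap.neg_apply, LinearMap.zero_apply, n02, n22, smul_zero, neg_zero,
      smul_neg, smul_smul, neg_smul]
    simp [gB, E3, Pi.single_apply]
    ring
  · show gB (curv nabla (brF9 α) (E3 1) (E3 2) (E3 1)) (E3 2) = α ^ 2
    unfold curv
    simp only [br12, n21, n11, map_smul, map_zero, LinearMap.smul_apply,
      LinearMap.zero_apply, zero_smul, n12, n20, n22, smul_zero, smul_smul]
    simp [gB, E3, Pi.single_apply]
    ring
end
end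

section
/- Let 𝔩 be the F₁₁-Lie algebra with brackets [E₀,E₁] = αE₀, [E₀,E₂] = βE₀, [E₁,E₂] = 0 and the standard B-metric g. Then R(E₀,E₁,E₀,E₁) = α², R(E₀,E₂,E₀,E₂) = β², R(E₀,E₁,E₂,E₀) = -αβ, the scalar curvature is τ = 2(β² - α²), and R(x, y, φz, φw) = 0 for all x, y, z, w (where φE₀ = 0, φE₁ = E₂, φE₂ = -E₁). -/
noncomputable section

/-- The F₁₁-bracket: [E₀,E₁] = αE₀, [E₀,E₂] = βE₀, [E₁,E₂] = 0. -/
def brF11 (α β : ℝ) (x y : Fin 3 → ℝ) : Fin 3 → ℝ :=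
  ![α * (x 0 * y 1 - x 1 * y 0) + β * (x 0 * y 2 - x 2 * y 0), 0, 0]

/-- curvature of the F₁₁-case, τ = 2(β² - α²), and R(x,y,φz,φw) = 0. -/
theorem F11_curvature (α β : ℝ)
    (nabla : (Fin 3 → ℝ) →ₗ[ℝ] (Fin 3 → ℝ) →ₗ[ℝ] (Fin 3 → ℝ))
    (hK : ∀ i j k : Fin 3, 2 * gB (nabla (E3 i) (E3 j)) (E3 k) =
      gB (brF11 α β (E3 i) (E3 j)) (E3 k) + gB (brF11 α β (E3 k) (E3 i)) (E3 j)
        + gB (brF11 α β (E3 k) (E3 j)) (E3 i)) :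
    Rc nabla (brF11 α β) 0 1 0 1 = α ^ 2 ∧ Rc nabla (brF11 α β) 0 2 0 2 = β ^ 2 ∧
    Rc nabla (brF11 α β) 0 1 2 0 = -(α * β) ∧
    scal nabla (brF11 α β) = 2 * (β ^ 2 - α ^ 2) ∧
    (∀ x y z w : Fin 3 → ℝ,
      gB (curv nabla (brF11 α β) x y (phi3 z)) (phi3 w) = 0) := by
  have hE0 : E3 (0:Fin 3) = ![1,0,0] := by
    funext k; fin_cases k <;> simp [E3, Pi.single_apply]
  have hE1 : E3 (1:Fin 3) = ![0,1,0] := by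
    funext k; fin_cases k <;> simp [E3, Pi.single_apply]
  have hE2 : E3 (2:Fin 3) = ![0,0,1] := by
    funext k; fin_cases k <;> simp [E3, Pi.single_apply]
  have hval : ∀ i j : Fin 3, nabla (E3 i) (E3 j) =
      ![![![0,-α,β], ![α,0,0], ![β,0,0]],
        ![![0,0,0], ![0,0,0], ![0,0,0]],
        ![![0,0,0], ![0,0,0], ![0,0,0]]] i j := by
    intro i j
    have h0 := hK i j 0
    have h1 := hK i j 1
    have h2 := hK i j 2
    fin_cases i <;> fin_cases j <;>
      simp only [show (⟨0, by norm_num⟩ : Fin 3) = 0 from rfl,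
        show (⟨1, by norm_num⟩ : Fin 3) = 1 from rfl,
        show (⟨2, by norm_num⟩ : Fin 3) = 2 from rfl,
        hE0, hE1, hE2, gB, brF11, Matrix.cons_val_zero, Matrix.cons_val_one,
        Matrix.head_cons, Matrix.cons_val_two, Matrix.tail_cons] at h0 h1 h2 ⊢ <;>
    · funext k
      fin_cases k <;>
        simp only [show (⟨0, by norm_num⟩ : Fin 3) = 0 from rfl,
          show (⟨1, by norm_num⟩ : Fin 3) = 1 from rfl,
          show (⟨2, by norm_num⟩ : Fin 3) = 2 from rfl,
          Matrix.cons_val_zero, Matrix.cons_val_one, Matrix.head_cons,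
          Matrix.cons_val_two, Matrix.tail_cons] <;> linarith
  have h00 := hval 0 0
  have h01 := hval 0 1
  have h02 := hval 0 2
  have h10 := hval 1 0
  have h11 := hval 1 1
  have h12 := hval 1 2
  have h20 := hval 2 0
  have h21 := hval 2 1
  have h22 := hval 2 2
  simp only [Matrix.cons_val_zero, Matrix.cons_val_one, Matrix.head_cons,
    Matrix.cons_val_two, Matrix.tail_cons] at h00 h01 h02 h10 h11 h12 h20 h21 h22
  have hx : ∀ x : Fin 3 → ℝ, x = x 0 • E3 0 + x 1 • E3 1 + x 2 • E3 2 := by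
    intro x; funext k
    fin_cases k <;> simp [hE0, hE1, hE2]
  have hnab : ∀ x v : Fin 3 → ℝ,
      nabla x v = ![x 0 * (α * v 1 + β * v 2), -(x 0 * (α * v 0)), x 0 * (β * v 0)] := by
    intro x v
    conv_lhs => rw [hx x, hx v]
    simp only [map_add, map_smul, LinearMap.add_apply, LinearMap.smul_apply,
      h00, h01, h02, h10, h11, h12, h20, h21, h22]
    funext k
    fin_cases k <;> simp <;> ring
  have hcurv : ∀ x y z : Fin 3 → ℝ, curv nabla (brF11 α β) x y z =
      ![-((α * (x 0 * y 1 - x 1 * y 0) + β * (x 0 * y 2 - x 2 * y 0)) * (α * z 1 + β * z 2)),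
        (α * (x 0 * y 1 - x 1 * y 0) + β * (x 0 * y 2 - x 2 * y 0)) * (α * z 0),
        -((α * (x 0 * y 1 - x 1 * y 0) + β * (x 0 * y 2 - x 2 * y 0)) * (β * z 0))] := by
    intro x y z
    unfold curv
    funext k
    simp only [Pi.sub_apply, hnab, brF11]
    fin_cases k <;> simp <;> ring
  refine ⟨?_, ?_, ?_, ?_, ?_⟩
  · simp [Rc, gB, hcurv, hE0, hE1, hE2] <;> ring
  · simp [Rc, gB, hcurv, hE0, hE1, hE2] <;> ring
  · simp [Rc, gB, hcurv, hE0, hE1, hE2] <;> ring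
  · simp [scal, ricci, Rc, gB, hcurv, hE0, hE1, hE2] <;> ring
  · intro x y z w
    simp [gB, hcurv, phi3] <;> ring
end
end

section
/- Let 𝔩 be the Lie algebra with brackets [E₀,E₁] = -a₁E₁ - a₂E₂, [E₀,E₂] = -a₂E₁ + a₁E₂, [E₁,E₂] = 0 for real constants a₁, a₂, and g the standard B-metric. Writing μ = a₁ and ν = -2a₂, the nonzero covariant derivatives are ∇_{E₀}E₁ = (ν/2)E₂, ∇_{E₀}E₂ = (ν/2)E₁, ∇_{E₁}E₀ = μE₁, ∇_{E₂}E₀ = -μE₂, ∇_{E₁}E₁ = ∇_{E₂}E₂ = -μE₀, and the curvature satisfies R(E₀,E₁,E₁,E₀) = -μ², R(E₀,E₂,E₂,E₀) = μ², R(E₁,E₂,E₂,E₁) = -μ², R(E₀,E₁,E₂,E₀) = μν. -/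
noncomputable section

/-- The F₉⊕F₁₀ example bracket: [E₀,E₁] = -a₁E₁ - a₂E₂, [E₀,E₂] = -a₂E₁ + a₁E₂, [E₁,E₂] = 0. -/
def brEx (a1 a2 : ℝ) (x y : Fin 3 → ℝ) : Fin 3 → ℝ :=
  ![0, -a1 * (x 0 * y 1 - x 1 * y 0) - a2 * (x 0 * y 2 - x 2 * y 0),
    -a2 * (x 0 * y 1 - x 1 * y 0) + a1 * (x 0 * y 2 - x 2 * y 0)]

lemma gB_e0 (v : Fin 3 → ℝ) : gB v (E3 0) = v 0 := by simp [gB, E3, Pi.single_apply]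
lemma gB_e1 (v : Fin 3 → ℝ) : gB v (E3 1) = v 1 := by simp [gB, E3, Pi.single_apply]
lemma gB_e2 (v : Fin 3 → ℝ) : gB v (E3 2) = -v 2 := by simp [gB, E3, Pi.single_apply]

/-- covariant derivatives and curvature of the F₉⊕F₁₀ example,
with μ = a₁, ν = -2a₂. -/
theorem example_curvature (a1 a2 μ ν : ℝ) (hμ : μ = a1) (hν : ν = -2 * a2)
    (nabla : (Fin 3 → ℝ) →ₗ[ℝ] (Fin 3 → ℝ) →ₗ[ℝ] (Fin 3 → ℝ))
    (hK : ∀ i j k : Fin 3, 2 * gB (nabla (E3 i) (E3 j)) (E3 k) =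
      gB (brEx a1 a2 (E3 i) (E3 j)) (E3 k) + gB (brEx a1 a2 (E3 k) (E3 i)) (E3 j)
        + gB (brEx a1 a2 (E3 k) (E3 j)) (E3 i)) :
    nabla (E3 0) (E3 1) = (ν / 2) • E3 2 ∧ nabla (E3 0) (E3 2) = (ν / 2) • E3 1 ∧
    nabla (E3 1) (E3 0) = μ • E3 1 ∧ nabla (E3 2) (E3 0) = -μ • E3 2 ∧
    nabla (E3 1) (E3 1) = -μ • E3 0 ∧ nabla (E3 2) (E3 2) = -μ • E3 0 ∧
    Rc nabla (brEx a1 a2) 0 1 1 0 = -μ ^ 2 ∧ Rc nabla (brEx a1 a2) 0 2 2 0 = μ ^ 2 ∧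
    Rc nabla (brEx a1 a2) 1 2 2 1 = -μ ^ 2 ∧ Rc nabla (brEx a1 a2) 0 1 2 0 = μ * ν := by
  subst hμ hν
  have key : ∀ i j : Fin 3, nabla (E3 i) (E3 j) =
      ![![0, -a2 • E3 2, -a2 • E3 1],
        ![μ • E3 1, -μ • E3 0, 0],
        ![-μ • E3 2, 0, -μ • E3 0]] i j := by
    intro i j
    funext k
    have c := hK i j k
    fin_cases i <;> fin_cases j <;> fin_cases k <;>
      simp [gB, E3, brEx, Pi.single_apply, Matrix.vecHead, Matrix.vecTail] at c ⊢ <;> linarith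
  have h00 := key 0 0; have h01 := key 0 1; have h02 := key 0 2
  have h10 := key 1 0; have h11 := key 1 1; have h12 := key 1 2
  have h20 := key 2 0; have h21 := key 2 1; have h22 := key 2 2
  simp only [Matrix.cons_val_zero, Matrix.cons_val_one, Matrix.head_cons,
    Matrix.cons_val_two, Matrix.tail_cons] at h00 h01 h02 h10 h11 h12 h20 h21 h22
  have b01 : brEx μ a2 (E3 0) (E3 1) = (-μ) • E3 1 + (-a2) • E3 2 := by
    funext k; fin_cases k <;> simp [brEx, E3, Pi.single_apply] <;> ring
  have b02 : brEx μ a2 (E3 0) (E3 2) = (-a2) • E3 1 + μ • E3 2 := by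
    funext k; fin_cases k <;> simp [brEx, E3, Pi.single_apply] <;> ring
  have b12 : brEx μ a2 (E3 1) (E3 2) = 0 := by
    funext k; fin_cases k <;> simp [brEx, E3, Pi.single_apply]
  refine ⟨by rw [h01]; congr 1; ring, by rw [h02]; congr 1; ring, by rw [h10], by rw [h20], by rw [h11], by rw [h22], ?_, ?_, ?_, ?_⟩ <;>
  · simp only [Rc, curv, b01, b02, b12, h00, h01, h02, h10, h11, h12, h20, h21, h22,
      map_add, map_smul, map_neg, map_zero, LinearMap.add_apply, LinearMap.smul_apply,
      LinearMap.neg_apply, LinearMap.zero_apply, smul_smul]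
    simp [gB, E3, Pi.single_apply, Pi.sub_apply, Pi.smul_apply, Pi.add_apply, Pi.neg_apply]
    ring
end
end
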